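/- Let u₂,…,uₙ be vectors in ℝⁿ, let λ₂,…,λₙ ∈ [−1,1), and let α ≥ 0. Define V^SRRW = ∑ᵢ (1/(2α(λᵢ+1)+1))·((1+λᵢ)/(1−λᵢ))·uᵢuᵢᵀ and V^HDT = (1/(2α+1))·∑ᵢ ((1+λᵢ)/(1−λᵢ))·uᵢuᵢᵀ. Then V^SRRW − (1/2)·V^HDT is positive semi-definite. -/

import Mathlib

lemma smul_psd {m : Type*} [Fintype m] {M : Matrix m m ℝ} (hM : M.PosSemidef)
    {c : ℝ} (hc : 0 ≤ c) : (c • M).PosSemidef := by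
  constructor
  · rw [Matrix.IsHermitian, Matrix.conjTranspose_smul, hM.1]
    simp
  · intro x
    exact (hM.smul hc).2 x

lemma vecMulVec_psd {n : ℕ} (v : Fin n → ℝ) : (Matrix.vecMulVec v v).PosSemidef := by
  have : Matrix.vecMulVec v v
      = Matrix.replicateCol Unit v * (Matrix.replicateCol Unit v).conjTranspose := by
    rw [Matrix.vecMulVec_eq Unit]
    congr 1
  rw [this]
  exact Matrix.posSemidef_self_mul_conjTranspose _

lemma aux_psd {n : ℕ} {ι : Type*} [Fintype ι] (u : ι → Fin n → ℝ) (d : ι → ℝ)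
    (hd : ∀ i, 0 ≤ d i) :
    Matrix.PosSemidef (∑ i, d i • Matrix.vecMulVec (u i) (u i)) := by
  exact Finset.sum_induction (fun i => d i • Matrix.vecMulVec (u i) (u i))
    Matrix.PosSemidef (fun a b ha hb => ha.add hb) Matrix.PosSemidef.zero
    (fun i _ => smul_psd (vecMulVec_psd (u i)) (hd i))

theorem stmt_8 {n : ℕ} {ι : Type*} [Fintype ι]
    (u : ι → Fin n → ℝ) (lam : ι → ℝ)
    (hlam : ∀ i, -1 ≤ lam i ∧ lam i < 1) (α : ℝ) (hα : 0 ≤ α) :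
    Matrix.PosSemidef
      ((∑ i, (1 / (2 * α * (lam i + 1) + 1) * ((1 + lam i) / (1 - lam i))) •
          Matrix.vecMulVec (u i) (u i)) -
        (1 / 2 : ℝ) • ((1 / (2 * α + 1)) •
          ∑ i, ((1 + lam i) / (1 - lam i)) • Matrix.vecMulVec (u i) (u i))) := by
  have key : ((∑ i, (1 / (2 * α * (lam i + 1) + 1) * ((1 + lam i) / (1 - lam i))) •
          Matrix.vecMulVec (u i) (u i)) -
        (1 / 2 : ℝ) • ((1 / (2 * α + 1)) •
          ∑ i, ((1 + lam i) / (1 - lam i)) • Matrix.vecMulVec (u i) (u i)))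
      = ∑ i, ((1 / (2 * α * (lam i + 1) + 1) -
          (1 / 2) * (1 / (2 * α + 1))) * ((1 + lam i) / (1 - lam i))) •
          Matrix.vecMulVec (u i) (u i) := by
    rw [Finset.smul_sum, Finset.smul_sum, ← Finset.sum_sub_distrib]
    congr 1; ext i
    rw [smul_smul, smul_smul, ← sub_smul]
    ring_nf
  rw [key]
  apply aux_psd
  intro i
  obtain ⟨h1, h2⟩ := hlam i
  have hr : 0 ≤ (1 + lam i) / (1 - lam i) :=
    div_nonneg (by linarith) (by linarith)
  have hpos : (0:ℝ) < 2 * α * (lam i + 1) + 1 := by nlinarith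
  have hpos2 : (0:ℝ) < 2 * α + 1 := by linarith
  have hle : 2 * α * (lam i + 1) + 1 ≤ 2 * (2 * α + 1) := by nlinarith
  have : (1/2) * (1 / (2 * α + 1)) ≤ 1 / (2 * α * (lam i + 1) + 1) := by
    rw [div_mul_div_comm, one_mul]
    apply one_div_le_one_div_of_le hpos hle
  exact mul_nonneg (by linarith) hr
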